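/- Let M be a nonempty compact connected topological space equipped with a finite Borel measure μ, let β : M → ℝ be continuous, let u : M → ℝ be Borel measurable such that m ↦ |u(m)|^{β(m)} is integrable, and let c > 0 be a constant satisfying ∫_M (|u(m)|/c)^{β(m)} dμ(m) = 1. Then there exists ζ ∈ M such that ∫_M |u(m)|^{β(m)} dμ(m) = c^{β(ζ)}. -/

import Mathlib

open MeasureTheory

/-- On a nonempty compact connected space with a finite Borel
measure, if `c > 0` satisfies the unit-modular equation
`∫ (|u(m)|/c)^{β(m)} dμ = 1`, then `∫ |u(m)|^{β(m)} dμ = c^{β(ζ)}` for some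
point `ζ`. -/
theorem stmt_1 {M : Type*} [TopologicalSpace M] [CompactSpace M]
    [ConnectedSpace M] [Nonempty M] [MeasurableSpace M] [BorelSpace M]
    (μ : Measure M) [IsFiniteMeasure μ]
    (β : M → ℝ) (hβ : Continuous β)
    (u : M → ℝ) (hu : Measurable u)
    (h_int : Integrable (fun m => |u m| ^ (β m)) μ)
    (c : ℝ) (hc : 0 < c)
    (h_unit : ∫ m, (|u m| / c) ^ (β m) ∂μ = 1) :
    ∃ ζ : M, ∫ m, |u m| ^ (β m) ∂μ = c ^ (β ζ) := by
  set f : M → ℝ := fun m => c ^ (β m) with hf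
  have hfc : Continuous f := Continuous.rpow continuous_const hβ (fun x => Or.inl hc.ne')
  have hfpos : ∀ m, 0 < f m := fun m => Real.rpow_pos_of_pos hc _
  obtain ⟨m₁, -, hm₁⟩ := isCompact_univ.exists_isMinOn Set.univ_nonempty hfc.continuousOn
  obtain ⟨m₂, -, hm₂⟩ := isCompact_univ.exists_isMaxOn Set.univ_nonempty hfc.continuousOn
  have hm₁ : ∀ m, f m₁ ≤ f m := fun m => hm₁ (Set.mem_univ m)
  have hm₂ : ∀ m, f m ≤ f m₂ := fun m => hm₂ (Set.mem_univ m)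
  set I : ℝ := ∫ m, |u m| ^ (β m) ∂μ with hI
  have hkey : ∀ m, (|u m| / c) ^ (β m) = |u m| ^ (β m) / f m := fun m =>
    Real.div_rpow (abs_nonneg _) hc.le _
  have hg_int : Integrable (fun m => (|u m| / c) ^ (β m)) μ := by
    have heq : (fun m => (|u m| / c) ^ (β m)) = fun m => |u m| ^ (β m) * (f m)⁻¹ :=
      funext fun m => by rw [hkey, div_eq_mul_inv]
    rw [heq]
    have := Integrable.bdd_mul (f := fun m => (f m)⁻¹) h_int
      ((hfc.measurable.inv).aestronglyMeasurable)
      (c := (f m₁)⁻¹) (Filter.Eventually.of_forall fun m => by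
        rw [Real.norm_eq_abs, abs_of_nonneg (inv_nonneg.2 (hfpos m).le)]
        exact inv_anti₀ (hfpos m₁) (hm₁ m))
    simpa [mul_comm] using this
  have hnonneg : ∀ m, 0 ≤ |u m| ^ (β m) := fun m => Real.rpow_nonneg (abs_nonneg _) _
  have h_le : I ≤ f m₂ := by
    have h1 : ∫ m, |u m| ^ (β m) / f m₂ ∂μ ≤ ∫ m, (|u m| / c) ^ (β m) ∂μ := by
      refine integral_mono (h_int.div_const _) hg_int fun m => ?_
      rw [hkey]
      exact div_le_div_of_nonneg_left (hnonneg m) (hfpos m) (hm₂ m)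
    rw [h_unit, integral_div] at h1
    exact (div_le_one (hfpos m₂)).mp h1
  have h_ge : f m₁ ≤ I := by
    have h1 : ∫ m, (|u m| / c) ^ (β m) ∂μ ≤ ∫ m, |u m| ^ (β m) / f m₁ ∂μ := by
      refine integral_mono hg_int (h_int.div_const _) fun m => ?_
      rw [hkey]
      exact div_le_div_of_nonneg_left (hnonneg m) (hfpos m₁) (hm₁ m)
    rw [h_unit, integral_div] at h1
    exact (one_le_div (hfpos m₁)).mp h1
  obtain ⟨ζ, hζ⟩ := intermediate_value_univ m₁ m₂ hfc ⟨h_ge, h_le⟩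
  exact ⟨ζ, hζ.symm⟩
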